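/- Let H be a real Hilbert space, D ⊆ H a nonempty set, and T : H → H quasinonexpansive on D. Then Fix T ∩ D equals the intersection over all x ∈ D of the sets {y ∈ D | ⟨y − Tx, x − Tx⟩ ≤ (1/2)‖Tx − x‖²}. -/

import Mathlib

open Filter Topology TopologicalSpace Function

variable {H : Type*} [NormedAddCommGroup H] [InnerProductSpace ℝ H]

def WeakConverge (x : ℕ → H) (p : H) : Prop :=
  Tendsto ((toWeakSpace ℝ H) ∘ x) atTop (nhds ((toWeakSpace ℝ H) p))

def FixSet (T : H → H) : Set H := {x | Function.IsFixedPt T x}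

def QuasiNonexpansiveOn (T : H → H) (s : Set H) : Prop :=
  ∀ ⦃x⦄, x ∈ s → ∀ ⦃y⦄, y ∈ FixSet T ∩ s → ‖T x - y‖ ≤ ‖x - y‖

def NonexpansiveOn (T : H → H) (s : Set H) : Prop := LipschitzOnWith 1 T s

lemma key_ineq (a b y : H) :
    (inner ℝ (y - b) (a - b) : ℝ) ≤ (1/2) * ‖b - a‖ ^ 2 ↔ ‖b - y‖ ≤ ‖a - y‖ := by
  have e1 : ‖b - y‖ ^ 2 = ‖b‖ ^ 2 - 2 * inner ℝ b y + ‖y‖ ^ 2 := norm_sub_sq_real b y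
  have e2 : ‖a - y‖ ^ 2 = ‖a‖ ^ 2 - 2 * inner ℝ a y + ‖y‖ ^ 2 := norm_sub_sq_real a y
  have e3 : ‖b - a‖ ^ 2 = ‖b‖ ^ 2 - 2 * inner ℝ b a + ‖a‖ ^ 2 := norm_sub_sq_real b a
  have e4 : (inner ℝ (y - b) (a - b) : ℝ)
      = inner ℝ y a - inner ℝ y b - inner ℝ b a + inner ℝ b b := by
    simp [inner_sub_left, inner_sub_right]; ring
  have e5 : (inner ℝ b b : ℝ) = ‖b‖ ^ 2 := real_inner_self_eq_norm_sq b
  have c1 : (inner ℝ y a : ℝ) = inner ℝ a y := real_inner_comm a y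
  have c2 : (inner ℝ y b : ℝ) = inner ℝ b y := real_inner_comm b y
  constructor
  · intro h
    have h2 : ‖b - y‖ ^ 2 ≤ ‖a - y‖ ^ 2 := by nlinarith
    nlinarith [norm_nonneg (b - y), norm_nonneg (a - y), h2]
  · intro h
    have h2 : ‖b - y‖ ^ 2 ≤ ‖a - y‖ ^ 2 := by
      nlinarith [norm_nonneg (b - y), norm_nonneg (a - y)]
    nlinarith

theorem quasinonexpansive_fixedPoint_characterization {D : Set H} {T : H → H}
    (hD_nonempty : D.Nonempty) (hT_quasi : QuasiNonexpansiveOn T D) :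
    FixSet T ∩ D =
      ⋂ x ∈ D, {y ∈ D | (inner ℝ (y - T x) (x - T x) : ℝ) ≤ (1/2) * ‖T x - x‖ ^ 2} := by
  ext y
  simp only [Set.mem_inter_iff, Set.mem_iInter, Set.mem_setOf_eq]
  constructor
  · rintro ⟨hfix, hyD⟩
    intro x hx
    exact ⟨hyD, (key_ineq x (T x) y).mpr (hT_quasi hx ⟨hfix, hyD⟩)⟩
  · intro h
    obtain ⟨x₀, hx₀⟩ := hD_nonempty
    have hyD : y ∈ D := (h x₀ hx₀).1
    have hy := (key_ineq y (T y) y).mp (h y hyD).2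
    have : ‖T y - y‖ ≤ 0 := by simpa using hy
    have : T y = y := by
      have := le_antisymm this (norm_nonneg _)
      rwa [norm_eq_zero, sub_eq_zero] at this
    exact ⟨this, hyD⟩
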